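/- Suppose L1 satisfies the fixed point equation L1(𝐀1 + 𝐁1 L1) = 𝐂1 + 𝐃1 L1 of the matrix LFT L ↦ (𝐂1 + 𝐃1 L)(𝐀1 + 𝐁1 L)⁻¹, with 𝐇1 := 𝐀1 + 𝐁1 L1 invertible. Then the linearized perturbation dynamics of the LFT at L1 are given by the linear operator 𝛀1(Δ) = (𝐃1 − L1 𝐁1) Δ 𝐇1⁻¹; in particular its spectrum is {λ/μ : λ ∈ spec(𝐃1 − L1 𝐁1), μ ∈ spec(𝐀1 + 𝐁1 L1)}. -/

import Mathlib

open Matrix Polynomial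

attribute [local instance] Matrix.normedAddCommGroup Matrix.normedSpace

section SpecAux


variable {n : ℕ}

lemma mem_spec_iff_det {M : Matrix (Fin n) (Fin n) ℂ} {z : ℂ} :
    z ∈ spectrum ℂ M ↔ (z • (1 : Matrix (Fin n) (Fin n) ℂ) - M).det = 0 := by
  rw [spectrum.mem_iff, Algebra.algebraMap_eq_smul_one]
  constructor
  · intro h
    by_contra hd
    exact h ((Matrix.isUnit_iff_isUnit_det _).mpr (isUnit_iff_ne_zero.mpr hd))
  · intro h hU
    rw [Matrix.isUnit_iff_isUnit_det, h] at hU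
    exact hU.ne_zero rfl

lemma charpoly_eval (M : Matrix (Fin n) (Fin n) ℂ) (z : ℂ) :
    M.charpoly.eval z = (z • (1 : Matrix (Fin n) (Fin n) ℂ) - M).det := by
  rw [Matrix.charpoly, ← Polynomial.coe_evalRingHom, RingHom.map_det]
  congr 1
  ext i j
  by_cases h : i = j <;>
    simp [h, Matrix.charmatrix_apply_eq, Matrix.charmatrix_apply_ne, Matrix.one_apply,
      Matrix.smul_apply]

lemma mem_spec_iff_root {M : Matrix (Fin n) (Fin n) ℂ} {z : ℂ} :
    z ∈ spectrum ℂ M ↔ M.charpoly.IsRoot z := by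
  rw [mem_spec_iff_det, Polynomial.IsRoot, charpoly_eval]

lemma spec_nonempty (hn : 0 < n) (M : Matrix (Fin n) (Fin n) ℂ) :
    (spectrum ℂ M).Nonempty := by
  have hdeg : M.charpoly.degree ≠ 0 := by
    rw [Matrix.charpoly_degree_eq_dim]
    simpa using hn.ne'
  have : 0 < M.charpoly.degree := by
    rw [Matrix.charpoly_degree_eq_dim]; simpa using hn
  obtain ⟨z, hz⟩ := Complex.exists_root this
  exact ⟨z, mem_spec_iff_root.mpr hz⟩

lemma spec_transpose (M : Matrix (Fin n) (Fin n) ℂ) : spectrum ℂ Mᵀ = spectrum ℂ M := by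
  ext z
  rw [mem_spec_iff_det, mem_spec_iff_det, ← Matrix.det_transpose (z • 1 - M)]
  congr! 2
  rw [Matrix.transpose_sub, Matrix.transpose_smul, Matrix.transpose_one]

lemma exists_eigenvec {M : Matrix (Fin n) (Fin n) ℂ} {z : ℂ} (hz : z ∈ spectrum ℂ M) :
    ∃ v : Fin n → ℂ, v ≠ 0 ∧ M *ᵥ v = z • v := by
  rw [← AlgEquiv.spectrum_eq Matrix.toLinAlgEquiv',
    ← Module.End.hasEigenvalue_iff_mem_spectrum] at hz
  obtain ⟨v, hv, hv0⟩ := hz.exists_hasEigenvector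
  refine ⟨v, hv0, ?_⟩
  have := Module.End.mem_eigenspace_iff.mp hv
  simpa [Matrix.toLinAlgEquiv'_apply, Matrix.toLin'_apply] using this

lemma key_induction (P : Matrix (Fin a) (Fin a) ℂ) (Q : Matrix (Fin b) (Fin b) ℂ)
    (X : Matrix (Fin a) (Fin b) ℂ) (z : ℂ) (hX : P * X * Q = z • X) (l : List ℂ) :
    (l.map (fun t => P - t • 1)).prod * X * Q ^ l.length =
      X * (l.map (fun t => z • (1 : Matrix (Fin b) (Fin b) ℂ) - t • Q)).prod := by
  induction l with
  | nil => simp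
  | cons t l ih =>
    set PR := (l.map (fun t => P - t • 1)).prod with hPR
    set prodQ := (l.map (fun t => z • (1 : Matrix (Fin b) (Fin b) ℂ) - t • Q)).prod with hprodQ
    have hcomm : Q * prodQ = prodQ * Q := by
      refine (Commute.list_prod_right _ _ ?_).eq
      intro p hp
      simp only [List.mem_map] at hp
      obtain ⟨t', _, rfl⟩ := hp
      exact ((Commute.one_right Q).smul_right z).sub_right ((Commute.refl Q).smul_right t')
    simp only [List.map_cons, List.prod_cons, List.length_cons]
    calc (P - t • 1) * PR * X * Q ^ (l.length + 1)
        = (P - t • 1) * (PR * X * Q ^ l.length * Q) := by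
          rw [pow_succ, Matrix.mul_assoc (P - t • 1) PR X,
            Matrix.mul_assoc (P - t • 1) (PR * X) (Q ^ l.length * Q),
            ← Matrix.mul_assoc (PR * X) (Q ^ l.length) Q]
      _ = (P - t • 1) * (X * (Q * prodQ)) := by
          rw [ih, Matrix.mul_assoc X prodQ Q, ← hcomm]
      _ = P * (X * (Q * prodQ)) - t • (X * (Q * prodQ)) := by
          rw [Matrix.sub_mul, Matrix.smul_mul, Matrix.one_mul]
      _ = z • X * prodQ - t • (X * (Q * prodQ)) := by
          rw [← Matrix.mul_assoc X Q prodQ, ← Matrix.mul_assoc P (X * Q) prodQ,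
            ← Matrix.mul_assoc P X Q, hX]
      _ = X * ((z • 1 - t • Q) * prodQ) := by
          simp [Matrix.sub_mul, Matrix.smul_mul, Matrix.one_mul, Matrix.mul_sub,
            Matrix.mul_smul, Matrix.mul_assoc]

lemma CH_prod (P : Matrix (Fin a) (Fin a) ℂ) :
    ((P.charpoly.roots.toList).map (fun t => P - t • 1)).prod = 0 := by
  have h0 : (Polynomial.aeval P) P.charpoly = 0 := P.aeval_self_charpoly
  have hsp : P.charpoly = (P.charpoly.roots.map (fun t => X - C t)).prod :=
    (IsAlgClosed.splits P.charpoly).eq_prod_roots_of_monic P.charpoly_monic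
  rw [hsp, ← Multiset.coe_toList P.charpoly.roots, Multiset.map_coe, Multiset.prod_coe,
    map_list_prod (Polynomial.aeval P)] at h0
  rw [← h0, List.map_map]
  congr 1
  apply List.map_congr_left
  intro t _
  simp [Algebra.algebraMap_eq_smul_one]

lemma forward_lemma (P : Matrix (Fin a) (Fin a) ℂ) (Q : Matrix (Fin b) (Fin b) ℂ)
    (T : Module.End ℂ (Matrix (Fin a) (Fin b) ℂ)) (hT : ∀ X, T X = P * X * Q)
    {z : ℂ} (hz : z ∈ spectrum ℂ T) :
    ∃ l ∈ spectrum ℂ P, ∃ μ ∈ spectrum ℂ Q, z = l * μ := by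
  obtain ⟨X, hXe, hX0⟩ :=
    (Module.End.hasEigenvalue_iff_mem_spectrum.mpr hz).exists_hasEigenvector
  have hX : P * X * Q = z • X := by rw [← hT]; exact Module.End.mem_eigenspace_iff.mp hXe
  -- X has a nonzero entry
  have hex : ∃ i j, X i j ≠ 0 := by
    by_contra h
    push_neg at h
    exact hX0 (by ext i j; simpa using h i j)
  obtain ⟨i0, j0, hij⟩ := hex
  have hb : 0 < b := j0.pos
  -- main identity
  have hkey := key_induction P Q X z hX P.charpoly.roots.toList
  rw [CH_prod, Matrix.zero_mul, Matrix.zero_mul] at hkey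
  -- some factor is singular
  have hfac : ∃ t ∈ P.charpoly.roots.toList,
      ¬IsUnit (z • (1 : Matrix (Fin b) (Fin b) ℂ) - t • Q) := by
    by_contra h
    push_neg at h
    have hunit : IsUnit ((P.charpoly.roots.toList.map
        (fun t => z • (1 : Matrix (Fin b) (Fin b) ℂ) - t • Q)).prod) := by
      apply List.prod_isUnit
      intro m hm
      simp only [List.mem_map] at hm
      obtain ⟨t, ht, rfl⟩ := hm
      exact h t ht
    have hdetu := (Matrix.isUnit_iff_isUnit_det _).mp hunit
    have : X = 0 := by
      have h3 := congrArg (fun M => M * ((P.charpoly.roots.toList.map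
        (fun t => z • (1 : Matrix (Fin b) (Fin b) ℂ) - t • Q)).prod)⁻¹) hkey.symm
      simpa [Matrix.mul_assoc, Matrix.mul_nonsing_inv _ hdetu, Matrix.zero_mul] using h3
    exact hX0 this
  obtain ⟨t, htl, htu⟩ := hfac
  have htP : t ∈ spectrum ℂ P := by
    rw [mem_spec_iff_root]
    exact Polynomial.isRoot_of_mem_roots (Multiset.mem_toList.mp htl)
  have hdet : (z • (1 : Matrix (Fin b) (Fin b) ℂ) - t • Q).det = 0 := by
    by_contra hd
    exact htu ((Matrix.isUnit_iff_isUnit_det _).mpr (isUnit_iff_ne_zero.mpr hd))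
  by_cases ht0 : t = 0
  · -- then z = 0
    have hz0 : z = 0 := by
      rw [ht0] at hdet
      simp only [zero_smul, sub_zero, Matrix.det_smul, Matrix.det_one, mul_one] at hdet
      simpa using pow_eq_zero_iff (by simpa using hb.ne' : Fintype.card (Fin b) ≠ 0) |>.mp hdet
    obtain ⟨μ, hμ⟩ := spec_nonempty hb Q
    exact ⟨t, htP, μ, hμ, by rw [hz0, ht0, zero_mul]⟩
  · refine ⟨t, htP, z / t, ?_, ?_⟩
    · rw [mem_spec_iff_det]
      have hrw : z • (1 : Matrix (Fin b) (Fin b) ℂ) - t • Q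
          = t • ((z / t) • (1 : Matrix (Fin b) (Fin b) ℂ) - Q) := by
        rw [smul_sub, smul_smul, mul_div_cancel₀ _ ht0]
      rw [hrw, Matrix.det_smul] at hdet
      exact (mul_eq_zero.mp hdet).resolve_left (pow_ne_zero _ ht0)
    · rw [mul_comm, div_mul_cancel₀ z ht0]

lemma reverse_lemma (P : Matrix (Fin a) (Fin a) ℂ) (Q : Matrix (Fin b) (Fin b) ℂ)
    (T : Module.End ℂ (Matrix (Fin a) (Fin b) ℂ)) (hT : ∀ X, T X = P * X * Q)
    {l μ : ℂ} (hl : l ∈ spectrum ℂ P) (hμ : μ ∈ spectrum ℂ Q) :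
    l * μ ∈ spectrum ℂ T := by
  obtain ⟨u, hu0, hu⟩ := exists_eigenvec hl
  obtain ⟨w, hw0, hw⟩ := exists_eigenvec ((spec_transpose Q).symm ▸ hμ)
  have hw' : w ᵥ* Q = μ • w := by rw [← Matrix.mulVec_transpose]; exact hw
  set X : Matrix (Fin a) (Fin b) ℂ := Matrix.vecMulVec u w with hXdef
  have hX0 : X ≠ 0 := by
    obtain ⟨i, hi⟩ := Function.ne_iff.mp hu0
    obtain ⟨j, hj⟩ := Function.ne_iff.mp hw0
    intro h
    have h2 : X i j = 0 := by rw [h]; rfl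
    rw [hXdef, Matrix.vecMulVec_apply] at h2
    rcases mul_eq_zero.mp h2 with h' | h'
    · exact hi (by simpa using h')
    · exact hj (by simpa using h')
  have key : P * Matrix.vecMulVec u w * Q = Matrix.vecMulVec (P *ᵥ u) (w ᵥ* Q) := by
    ext i j
    simp only [Matrix.mul_apply, Matrix.vecMulVec_apply, Matrix.mulVec, Matrix.vecMul,
      dotProduct, Finset.sum_mul, Finset.mul_sum]
    rw [Finset.sum_comm]
    conv_rhs => rw [Finset.sum_comm]
    exact Finset.sum_congr rfl fun k _ => Finset.sum_congr rfl fun k' _ => by ring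
  have hTX : T X = (l * μ) • X := by
    rw [hT, hXdef, key, hu, hw']
    ext i j
    simp only [Matrix.vecMulVec_apply, Matrix.smul_apply, Pi.smul_apply, smul_eq_mul]
    ring
  have hev : Module.End.HasEigenvalue T (l * μ) :=
    Module.End.hasEigenvalue_of_hasEigenvector
      ⟨Module.End.mem_eigenspace_iff.mpr hTX, hX0⟩
  exact hev.mem_spectrum

lemma spec_inv (H : Matrix (Fin n) (Fin n) ℂ) (hH : IsUnit H.det) :
    spectrum ℂ H⁻¹ = {μ : ℂ | ∃ m ∈ spectrum ℂ H, μ = m⁻¹} := by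
  have hHu : IsUnit H := (Matrix.isUnit_iff_isUnit_det H).mpr hH
  haveI := H.invertibleOfIsUnitDet hH
  set aU : (Matrix (Fin n) (Fin n) ℂ)ˣ := unitOfInvertible H with haU
  have hinv : ((aU⁻¹ : (Matrix (Fin n) (Fin n) ℂ)ˣ) : Matrix (Fin n) (Fin n) ℂ) = H⁻¹ := by
    rw [← Matrix.invOf_eq_nonsing_inv]; rfl
  have hIU : IsUnit H⁻¹ := by rw [← hinv]; exact Units.isUnit _
  ext μ
  simp only [Set.mem_setOf_eq]
  constructor
  · intro hμ
    have hμ0 : μ ≠ 0 := by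
      rintro rfl
      exact (spectrum.zero_mem_iff ℂ).mp hμ hIU
    refine ⟨μ⁻¹, ?_, (inv_inv μ).symm⟩
    have h2 := (spectrum.inv_mem_iff (r := Units.mk0 μ hμ0) (a := aU⁻¹)).mp
      (by simpa [hinv] using hμ)
    rw [inv_inv] at h2
    simpa [haU, unitOfInvertible] using h2
  · rintro ⟨m, hm, rfl⟩
    have hm0 : m ≠ 0 := by
      rintro rfl
      exact (spectrum.zero_mem_iff ℂ).mp hm hHu
    have := (spectrum.inv_mem_iff (r := Units.mk0 m hm0) (a := aU)).mp (by simp only [Units.val_mk0]; exact hm)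
    simpa [hinv] using this

end SpecAux

section DerivAux

variable {E : Type*} [NormedAddCommGroup E] [NormedSpace ℂ E] {n m p : ℕ}

lemma diffAt_matrix {f : E → Matrix (Fin n) (Fin m) ℂ} {x : E}
    (h : ∀ i j, DifferentiableAt ℂ (fun e => f e i j) x) : DifferentiableAt ℂ f x :=
  differentiableAt_pi.mpr fun i => differentiableAt_pi.mpr (h i)

lemma diffAt_entry {f : E → Matrix (Fin n) (Fin m) ℂ} {x : E}
    (h : DifferentiableAt ℂ f x) (i : Fin n) (j : Fin m) :
    DifferentiableAt ℂ (fun e => f e i j) x :=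
  differentiableAt_pi.mp (differentiableAt_pi.mp h i) j

lemma diffAt_det {f : E → Matrix (Fin n) (Fin n) ℂ} {x : E}
    (h : DifferentiableAt ℂ f x) : DifferentiableAt ℂ (fun e => (f e).det) x := by
  simp only [Matrix.det_apply, Units.smul_def, zsmul_eq_mul]
  apply DifferentiableAt.fun_sum
  intro σ _
  apply DifferentiableAt.const_mul
  exact (HasFDerivAt.finset_prod (fun i _ =>
    ((diffAt_entry h (σ i) i).hasFDerivAt))).differentiableAt

lemma diffAt_adjugate {f : E → Matrix (Fin n) (Fin n) ℂ} {x : E}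
    (h : DifferentiableAt ℂ f x) : DifferentiableAt ℂ (fun e => (f e).adjugate) x := by
  apply diffAt_matrix
  intro i j
  simp only [Matrix.adjugate_apply]
  apply diffAt_det
  apply diffAt_matrix
  intro k l
  simp only [Matrix.updateRow_apply]
  by_cases hk : k = j
  · simp [hk]
  · simp only [hk, if_false]
    exact diffAt_entry h k l

noncomputable def lmulCLM {a b c : ℕ} (M : Matrix (Fin a) (Fin b) ℂ) :
    Matrix (Fin b) (Fin c) ℂ →L[ℂ] Matrix (Fin a) (Fin c) ℂ :=
  LinearMap.toContinuousLinearMap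
    { toFun := fun X => M * X
      map_add' := fun X Y => Matrix.mul_add M X Y
      map_smul' := fun c X => Matrix.mul_smul M c X }

lemma lmulCLM_apply {a b c : ℕ} (M : Matrix (Fin a) (Fin b) ℂ) (X : Matrix (Fin b) (Fin c) ℂ) :
    lmulCLM M X = M * X := rfl

lemma isBBM_mul {a b c : ℕ} : IsBoundedBilinearMap ℂ
    (fun p : Matrix (Fin a) (Fin b) ℂ × Matrix (Fin b) (Fin c) ℂ => p.1 * p.2) := by
  refine ⟨fun X Y Z => Matrix.add_mul X Y Z, fun r X Y => Matrix.smul_mul r X Y,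
    fun X Y Z => Matrix.mul_add X Y Z, fun r X Y => Matrix.mul_smul X r Y,
    ⟨b + 1, by positivity, fun X Y => ?_⟩⟩
  rw [Matrix.norm_le_iff (by positivity)]
  intro i j
  calc ‖(X * Y) i j‖ = ‖∑ k, X i k * Y k j‖ := by rw [Matrix.mul_apply]
    _ ≤ ∑ k, ‖X i k * Y k j‖ := norm_sum_le _ _
    _ ≤ ∑ _k : Fin b, ‖X‖ * ‖Y‖ := by
        refine Finset.sum_le_sum fun k _ => ?_
        rw [norm_mul]
        exact mul_le_mul (Matrix.norm_entry_le_entrywise_sup_norm X)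
          (Matrix.norm_entry_le_entrywise_sup_norm Y) (norm_nonneg _) (norm_nonneg _)
    _ = (b : ℝ) * (‖X‖ * ‖Y‖) := by simp [Finset.sum_const, mul_assoc]
    _ ≤ (b + 1) * ‖X‖ * ‖Y‖ := by
        rw [mul_assoc]
        exact mul_le_mul_of_nonneg_right (by linarith) (by positivity)

lemma diffAt_mul {f : E → Matrix (Fin n) (Fin m) ℂ} {g : E → Matrix (Fin m) (Fin p) ℂ} {x : E}
    (hf : DifferentiableAt ℂ f x) (hg : DifferentiableAt ℂ g x) :
    DifferentiableAt ℂ (fun e => f e * g e) x := by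
  apply diffAt_matrix
  intro i j
  simp only [Matrix.mul_apply]
  exact DifferentiableAt.fun_sum fun k _ => (diffAt_entry hf i k).mul (diffAt_entry hg k j)

lemma part1 {d1 d2 : ℕ}
    (A : Matrix (Fin d1) (Fin d1) ℂ) (B : Matrix (Fin d1) (Fin d2) ℂ)
    (C : Matrix (Fin d2) (Fin d1) ℂ) (D : Matrix (Fin d2) (Fin d2) ℂ)
    (L1 : Matrix (Fin d2) (Fin d1) ℂ)
    (hfix : L1 * (A + B * L1) = C + D * L1)
    (hH : IsUnit (A + B * L1).det)
    (Ω : Matrix (Fin d2) (Fin d1) ℂ →L[ℂ] Matrix (Fin d2) (Fin d1) ℂ)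
    (hΩ : ∀ Δ, Ω Δ = (D - L1 * B) * Δ * (A + B * L1)⁻¹) :
    HasFDerivAt (fun L : Matrix (Fin d2) (Fin d1) ℂ => (C + D * L) * (A + B * L)⁻¹) Ω L1 := by
  set f := fun L : Matrix (Fin d2) (Fin d1) ℂ => (C + D * L) * (A + B * L)⁻¹ with hfdef
  have hAff : HasFDerivAt (fun L : Matrix (Fin d2) (Fin d1) ℂ => A + B * L) (lmulCLM B) L1 :=
    (lmulCLM (c := d1) B).hasFDerivAt.const_add A
  have hCD : HasFDerivAt (fun L : Matrix (Fin d2) (Fin d1) ℂ => C + D * L) (lmulCLM D) L1 :=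
    (lmulCLM (c := d1) D).hasFDerivAt.const_add C
  have hgdiff : DifferentiableAt ℂ (fun L : Matrix (Fin d2) (Fin d1) ℂ => A + B * L) L1 :=
    hAff.differentiableAt
  have hdet : (A + B * L1).det ≠ 0 := hH.ne_zero
  have hfdiff : DifferentiableAt ℂ f L1 := by
    have hrw : f = fun L => ((A + B * L).det)⁻¹ • ((C + D * L) * (A + B * L).adjugate) := by
      funext L
      rw [hfdef]
      simp only
      rw [Matrix.inv_def, Ring.inverse_eq_inv', Matrix.mul_smul]
    rw [hrw]
    exact ((diffAt_det hgdiff).inv hdet).smul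
      (diffAt_mul hCD.differentiableAt (diffAt_adjugate hgdiff))
  have hf : HasFDerivAt f (fderiv ℂ f L1) L1 := hfdiff.hasFDerivAt
  set Φ := fderiv ℂ f L1 with hΦ
  -- near L1, f L * (A + B L) = C + D L
  have hmem : {L : Matrix (Fin d2) (Fin d1) ℂ | (A + B * L).det ≠ 0} ∈ nhds L1 := by
    have hc : Continuous fun L : Matrix (Fin d2) (Fin d1) ℂ => (A + B * L).det := by
      apply Continuous.matrix_det
      exact continuous_const.add (lmulCLM (c := d1) B).continuous
    exact (isOpen_compl_singleton.preimage hc).mem_nhds hdet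
  have hEv : (fun L => f L * (A + B * L)) =ᶠ[nhds L1]
      (fun L : Matrix (Fin d2) (Fin d1) ℂ => C + D * L) := by
    filter_upwards [hmem] with L hL
    rw [hfdef]
    simp only
    rw [Matrix.nonsing_inv_mul_cancel_right _ _ (isUnit_iff_ne_zero.mpr hL)]
  have hprod : HasFDerivAt (fun L => f L * (A + B * L))
      ((isBBM_mul.deriv (f L1, A + B * L1)).comp (Φ.prod (lmulCLM B))) L1 :=
    by
      have hbb : HasFDerivAt
          (fun p : Matrix (Fin d2) (Fin d1) ℂ × Matrix (Fin d1) (Fin d1) ℂ => p.1 * p.2)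
          (isBBM_mul.deriv (f L1, A + B * L1)) ((fun L => (f L, A + B * L)) L1) :=
        isBBM_mul.hasFDerivAt _
      exact hbb.comp L1 (hf.prodMk hAff)
  have hcongr : HasFDerivAt (fun L : Matrix (Fin d2) (Fin d1) ℂ => C + D * L)
      ((isBBM_mul.deriv (f L1, A + B * L1)).comp (Φ.prod (lmulCLM B))) L1 :=
    hprod.congr_of_eventuallyEq hEv.symm
  have huniq := hcongr.unique hCD
  have hfL1 : f L1 = L1 := by
    rw [hfdef]
    simp only
    rw [← hfix, Matrix.mul_nonsing_inv_cancel_right _ _ hH]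
  have hkey : ∀ Δ, L1 * (B * Δ) + Φ Δ * (A + B * L1) = D * Δ := by
    intro Δ
    have h4 := congrFun (congrArg DFunLike.coe huniq) Δ
    replace h4 : (isBBM_mul.deriv (f L1, A + B * L1)) (Φ Δ, lmulCLM B Δ) = lmulCLM D Δ := h4
    rw [IsBoundedBilinearMap.deriv_apply] at h4
    simpa [hfL1, lmulCLM_apply, ContinuousLinearMap.prod_apply] using h4
  have hΦeq : ∀ Δ, Φ Δ = (D - L1 * B) * Δ * (A + B * L1)⁻¹ := by
    intro Δ
    have h5 : Φ Δ * (A + B * L1) = (D - L1 * B) * Δ := by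
      have h6 := hkey Δ
      rw [← Matrix.mul_assoc L1 B Δ] at h6
      rw [Matrix.sub_mul]
      exact eq_sub_of_add_eq' h6
    rw [← h5, Matrix.mul_nonsing_inv_cancel_right _ _ hH]
  have : Ω = Φ := by
    ext Δ
    rw [hΩ Δ, hΦeq Δ]
  rw [this]
  exact hf

end DerivAux

/-- The linear operator `Δ ↦ (𝐃 - L1 𝐁) Δ (𝐀 + 𝐁 L1)⁻¹` (the linearized perturbation
dynamics of the matrix LFT at the fixed point `L1`). -/
noncomputable def perturbOp {d1 d2 : ℕ}
    (A : Matrix (Fin d1) (Fin d1) ℂ) (B : Matrix (Fin d1) (Fin d2) ℂ)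
    (D : Matrix (Fin d2) (Fin d2) ℂ) (L1 : Matrix (Fin d2) (Fin d1) ℂ) :
    Module.End ℂ (Matrix (Fin d2) (Fin d1) ℂ) where
  toFun Δ := (D - L1 * B) * Δ * (A + B * L1)⁻¹
  map_add' X Y := by simp [Matrix.mul_add, Matrix.add_mul]
  map_smul' c X := by simp [Matrix.mul_smul, Matrix.smul_mul]

/-- at a fixed point `L1` of the matrix LFT `L ↦ (𝐂 + 𝐃 L)(𝐀 + 𝐁 L)⁻¹` with
`𝐇1 = 𝐀 + 𝐁 L1` invertible, the linearization (Fréchet derivative) of the LFT at `L1` is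
`Δ ↦ (𝐃 - L1 𝐁) Δ 𝐇1⁻¹`, and its spectrum is
`{λ/μ : λ ∈ spec(𝐃 - L1 𝐁), μ ∈ spec(𝐀 + 𝐁 L1)}`. -/
theorem stmt_6 {d1 d2 : ℕ}
    (A : Matrix (Fin d1) (Fin d1) ℂ) (B : Matrix (Fin d1) (Fin d2) ℂ)
    (C : Matrix (Fin d2) (Fin d1) ℂ) (D : Matrix (Fin d2) (Fin d2) ℂ)
    (L1 : Matrix (Fin d2) (Fin d1) ℂ)
    (hfix : L1 * (A + B * L1) = C + D * L1)
    (hH : IsUnit (A + B * L1).det) :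
    HasFDerivAt (fun L : Matrix (Fin d2) (Fin d1) ℂ => (C + D * L) * (A + B * L)⁻¹)
      (LinearMap.toContinuousLinearMap (perturbOp A B D L1)) L1 ∧
    spectrum ℂ (perturbOp A B D L1) =
      {z : ℂ | ∃ l ∈ spectrum ℂ (D - L1 * B), ∃ m ∈ spectrum ℂ (A + B * L1), z = l / m} := by
  constructor
  · exact part1 A B C D L1 hfix hH _ (fun Δ => rfl)
  · ext z
    simp only [Set.mem_setOf_eq]
    constructor
    · intro hz
      obtain ⟨l, hl, μ, hμ, rfl⟩ := forward_lemma (D - L1 * B) (A + B * L1)⁻¹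
        (perturbOp A B D L1) (fun X => rfl) hz
      rw [spec_inv _ hH] at hμ
      obtain ⟨m, hm, rfl⟩ := hμ
      exact ⟨l, hl, m, hm, (div_eq_mul_inv l m).symm⟩
    · rintro ⟨l, hl, m, hm, rfl⟩
      have hμ : m⁻¹ ∈ spectrum ℂ (A + B * L1)⁻¹ := by
        rw [spec_inv _ hH]; exact ⟨m, hm, rfl⟩
      have hmem := reverse_lemma (D - L1 * B) (A + B * L1)⁻¹
        (perturbOp A B D L1) (fun X => rfl) hl hμ
      rwa [← div_eq_mul_inv] at hmem
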